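/- Let μ be a probability measure on ℝ × ℝ (the joint law of the source X and the private information θ), and let κ₁ and κ₂ be Markov kernels from ℝ × ℝ to ℝ (conditional laws of the transmitter output Y given (X, θ)). For c ∈ [0, 1] let κ_c = c•κ₁ + (1−c)•κ₂ be their pointwise convex combination, and define D_P(κ) = ⨅_{h : ℝ → ℝ measurable} ∫ (θ − h(y))² d(μ ⊗ κ)((x, θ), y), the infimum taken over all measurable estimators of the private information, with the integral valued in [0, ∞]. Then D_P(κ_c) ≥ c·D_P(κ₁) + (1 − c)·D_P(κ₂); i.e., the privacy level D_P is a concave function of the encoder's conditional distribution. -/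

import Mathlib

open MeasureTheory ProbabilityTheory
open scoped ENNReal

/-- `D_P(κ)`: the minimum mean squared error of any measurable estimator of the private
information `θ` (second coordinate) from the transmitter output `y`, when the
source/private-information pair has law `μ` and the encoder is the kernel `κ`. -/
noncomputable def distortionP (μ : Measure (ℝ × ℝ)) (κ : Kernel (ℝ × ℝ) ℝ) : ℝ≥0∞ :=
  ⨅ (h : ℝ → ℝ) (_ : Measurable h),
    ∫⁻ p, ENNReal.ofReal ((p.1.2 - h p.2) ^ 2) ∂(μ ⊗ₘ κ)

/-- Concavity of the privacy level `D_P` in the encoder's conditional distribution: for the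
pointwise convex combination `κc = c•κ₁ + (1−c)•κ₂` one has
`D_P(κc) ≥ c·D_P(κ₁) + (1−c)·D_P(κ₂)`. -/
theorem distortionP_concave (μ : Measure (ℝ × ℝ)) [IsProbabilityMeasure μ]
    (κ₁ κ₂ κc : Kernel (ℝ × ℝ) ℝ) [IsMarkovKernel κ₁] [IsMarkovKernel κ₂]
    (c : ℝ) (hc0 : 0 ≤ c) (hc1 : c ≤ 1)
    (hκc : ∀ p : ℝ × ℝ, κc p = ENNReal.ofReal c • κ₁ p + ENNReal.ofReal (1 - c) • κ₂ p) :
    ENNReal.ofReal c * distortionP μ κ₁ + ENNReal.ofReal (1 - c) * distortionP μ κ₂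
      ≤ distortionP μ κc := by
  haveI : IsMarkovKernel κc := by
    constructor
    intro p
    rw [hκc p]
    constructor
    simp only [Measure.add_apply, Measure.smul_apply, measure_univ, smul_eq_mul, mul_one]
    rw [← ENNReal.ofReal_add hc0 (by linarith)]
    norm_num
  rw [distortionP]
  refine le_iInf fun h => le_iInf fun hh => ?_
  have hf : Measurable fun p : (ℝ × ℝ) × ℝ => ENNReal.ofReal ((p.1.2 - h p.2) ^ 2) :=
    (measurable_fst.snd.sub (hh.comp measurable_snd)).pow_const 2 |>.ennreal_ofReal
  have hf' : Measurable (Function.uncurry fun (a : ℝ × ℝ) (b : ℝ) =>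
      ENNReal.ofReal ((a.2 - h b) ^ 2)) := hf
  have hm₁ : Measurable fun a : ℝ × ℝ =>
      ∫⁻ b, ENNReal.ofReal ((a.2 - h b) ^ 2) ∂κ₁ a := hf'.lintegral_kernel_prod_right
  have hm₂ : Measurable fun a : ℝ × ℝ =>
      ∫⁻ b, ENNReal.ofReal ((a.2 - h b) ^ 2) ∂κ₂ a := hf'.lintegral_kernel_prod_right
  have key : ∫⁻ p, ENNReal.ofReal ((p.1.2 - h p.2) ^ 2) ∂(μ ⊗ₘ κc)
      = ENNReal.ofReal c * ∫⁻ p, ENNReal.ofReal ((p.1.2 - h p.2) ^ 2) ∂(μ ⊗ₘ κ₁)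
        + ENNReal.ofReal (1 - c) * ∫⁻ p, ENNReal.ofReal ((p.1.2 - h p.2) ^ 2) ∂(μ ⊗ₘ κ₂) := by
    rw [Measure.lintegral_compProd hf, Measure.lintegral_compProd hf,
      Measure.lintegral_compProd hf,
      ← lintegral_const_mul _ hm₁, ← lintegral_const_mul _ hm₂,
      ← lintegral_add_left (hm₁.const_mul _)]
    refine lintegral_congr fun a => ?_
    rw [hκc a, lintegral_add_measure, lintegral_smul_measure, lintegral_smul_measure]
    rfl
  rw [key]
  gcongr
  · exact iInf_le_of_le h (iInf_le _ hh)
  · exact iInf_le_of_le h (iInf_le _ hh)
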